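/- arXiv:2202.10568 — 7 statements merged into one kernel-verified Lean document; each statement's English description precedes it below -/
import Mathlib

section
/- A semi-decomposition on a topological space is of characteristic 0 if and only if it is R-closed, i.e. the element closure relation R = { (x,y) : y ∈ closure(F(x)) } is a closed subset of X × X. -/
open Filter Topology

universe u

/-- The bilateral prolongation `D(x)`. -/
def Prolong {X : Type u} [TopologicalSpace X] (F : X → Set X) (x : X) : Set X :=
  { y | ∃ (ι : Type u) (l : Filter ι) (xa ya : ι → X), l.NeBot ∧
      (∀ a, ya a ∈ F (xa a)) ∧ Tendsto xa l (nhds x) ∧ Tendsto ya l (nhds y) }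

lemma mem_prolong_iff {X : Type u} [TopologicalSpace X] (F : X → Set X) (x y : X) :
    y ∈ Prolong F x ↔ (x, y) ∈ closure {p : X × X | p.2 ∈ F p.1} := by
  constructor
  · rintro ⟨ι, l, xa, ya, hne, hm, hx, hy⟩
    exact mem_closure_of_tendsto (hx.prodMk_nhds hy) (Filter.Eventually.of_forall hm)
  · intro h
    obtain ⟨u, hSu, hu⟩ := mem_closure_iff_ultrafilter.mp h
    refine ⟨{p : X × X // p.2 ∈ F p.1}, Filter.comap Subtype.val u,
      fun a => a.1.1, fun a => a.1.2, ?_, fun a => a.2, ?_, ?_⟩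
    · rw [Filter.comap_neBot_iff]
      intro t ht
      obtain ⟨p, hpt, hpS⟩ := Filter.nonempty_of_mem (Filter.inter_mem ht hSu)
      exact ⟨⟨p, hpS⟩, hpt⟩
    · exact (continuous_fst.tendsto (x, y)).comp (tendsto_comap.mono_right hu)
    · exact (continuous_snd.tendsto (x, y)).comp (tendsto_comap.mono_right hu)

lemma mem_closure_S {X : Type u} [TopologicalSpace X] (F : X → Set X) {x y : X}
    (h : y ∈ closure (F x)) : (x, y) ∈ closure {p : X × X | p.2 ∈ F p.1} := by
  have hc : Continuous (fun b : X => (x, b)) := continuous_const.prodMk continuous_id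
  have h1 : (x, y) ∈ (fun b : X => (x, b)) '' closure (F x) :=
    Set.mem_image_of_mem _ h
  have h2 := image_closure_subset_closure_image hc h1
  refine closure_mono ?_ h2
  rintro p ⟨b, hb, rfl⟩
  exact hb

/-- a semi-decomposition on a topological space is of characteristic `0`
iff it is `R`-closed, where `R = {(x,y) | y ∈ closure (F x)}`. -/
theorem char_zero_iff_R_closed {X : Type u} [TopologicalSpace X] (F : X → Set X)
    (hmem : ∀ x, x ∈ F x) (hsub : ∀ x y, x ∈ F y → F x ⊆ F y) :
    (∀ x, closure (F x) = Prolong F x) ↔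
      IsClosed {p : X × X | p.2 ∈ closure (F p.1)} := by
  constructor
  · intro h
    have hR : {p : X × X | p.2 ∈ closure (F p.1)}
        = closure {p : X × X | p.2 ∈ F p.1} := by
      ext ⟨x, y⟩
      simp only [Set.mem_setOf_eq]
      rw [h x]
      exact mem_prolong_iff F x y
    rw [hR]
    exact isClosed_closure
  · intro hR x
    apply Set.Subset.antisymm
    · intro y hy
      exact (mem_prolong_iff F x y).mpr (mem_closure_S F hy)
    · intro y hy
      have h1 := (mem_prolong_iff F x y).mp hy
      have h2 : closure {p : X × X | p.2 ∈ F p.1}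
          ⊆ {p : X × X | p.2 ∈ closure (F p.1)} := by
        apply hR.closure_subset_iff.mpr
        intro p hp
        exact subset_closure hp
      exact h2 h1
end

section
/- Every weakly equicontinuous semi-decomposition on a metric space is of characteristic 0, i.e. closure(F(x)) = D(x) for every point x. -/
open Filter Topology

universe u

/-- Weak equicontinuity of a semi-decomposition on a metric space: for every `ε > 0`
there is `δ > 0` such that `d_H(F x, F y) < ε` whenever `dist x y < δ`. -/
def WeaklyEquicontinuous {X : Type u} [MetricSpace X] (F : X → Set X) : Prop :=
  ∀ ε : ℝ, 0 < ε → ∃ δ : ℝ, 0 < δ ∧ ∀ x y : X, dist x y < δ →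
    EMetric.hausdorffEdist (F x) (F y) < ENNReal.ofReal ε

/-- every weakly equicontinuous semi-decomposition on a metric space
is of characteristic `0`. -/
theorem weaklyEquicontinuous_char_zero {X : Type u} [MetricSpace X] (F : X → Set X)
    (hmem : ∀ x, x ∈ F x) (hsub : ∀ x y, x ∈ F y → F x ⊆ F y)
    (hwe : WeaklyEquicontinuous F) :
    ∀ x, closure (F x) = Prolong F x := by
  intro x
  apply Set.Subset.antisymm
  · intro y hy
    refine ⟨{ a : X // a ∈ F x }, Filter.comap Subtype.val (nhds y),
      fun _ => x, Subtype.val, ?_, fun a => a.2, tendsto_const_nhds, tendsto_comap⟩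
    rw [Filter.comap_neBot_iff]
    intro s hs
    rcases mem_closure_iff_nhds.1 hy s hs with ⟨z, hzs, hzF⟩
    exact ⟨⟨z, hzF⟩, hzs⟩
  · rintro y ⟨ι, l, xa, ya, hl, hmemF, hxa, hya⟩
    rw [Metric.mem_closure_iff]
    intro ε hε
    rcases hwe (ε / 2) (by linarith) with ⟨δ, hδ, hδ'⟩
    have h1 : ∀ᶠ a in l, dist (xa a) x < δ := (Metric.tendsto_nhds.1 hxa) δ hδ
    have h2 : ∀ᶠ a in l, dist (ya a) y < ε / 2 :=
      (Metric.tendsto_nhds.1 hya) (ε / 2) (by linarith)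
    rcases (h1.and h2).exists with ⟨a, ha1, ha2⟩
    have hH : EMetric.hausdorffEdist (F (xa a)) (F x) < ENNReal.ofReal (ε / 2) :=
      hδ' _ _ ha1
    rcases EMetric.exists_edist_lt_of_hausdorffEdist_lt (hmemF a) hH with ⟨z, hzF, hz⟩
    have hz' : dist (ya a) z < ε / 2 := by
      rwa [edist_lt_ofReal] at hz
    exact ⟨z, hzF, by
      calc dist y z ≤ dist y (ya a) + dist (ya a) z := dist_triangle _ _ _
        _ < ε / 2 + ε / 2 := by rw [dist_comm]; exact add_lt_add ha2 hz'
        _ = ε := by ring⟩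
end

section
/- Every weakly equicontinuous semi-decomposition on a metric space is R-closed: the relation { (x,y) ∈ X × X : y ∈ closure(F(x)) } is closed. -/
universe u

/-- every weakly equicontinuous semi-decomposition on a metric space
is `R`-closed: `{(x,y) | y ∈ closure (F x)}` is closed. -/
theorem weaklyEquicontinuous_R_closed {X : Type u} [MetricSpace X] (F : X → Set X)
    (hmem : ∀ x, x ∈ F x) (hsub : ∀ x y, x ∈ F y → F x ⊆ F y)
    (hwe : WeaklyEquicontinuous F) :
    IsClosed {p : X × X | p.2 ∈ closure (F p.1)} := by
  rw [← isSeqClosed_iff_isClosed]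
  intro u p hu hlim
  simp only [Set.mem_setOf_eq] at hu ⊢
  rw [EMetric.mem_closure_iff_infEdist_zero]
  by_contra h
  have hpos : 0 < EMetric.infEdist p.2 (F p.1) := pos_iff_ne_zero.mpr h
  obtain ⟨ε, hε0, hεlt⟩ : ∃ ε : ℝ, 0 < ε ∧
      ENNReal.ofReal ε + ENNReal.ofReal ε < EMetric.infEdist p.2 (F p.1) := by
    rcases ENNReal.lt_iff_exists_real_btwn.mp hpos with ⟨r, hr0, h0r, hrlt⟩
    refine ⟨r / 2, ?_, ?_⟩
    · have := ENNReal.ofReal_pos.mp h0r; positivity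
    · rw [← ENNReal.ofReal_add (by linarith [ENNReal.ofReal_pos.mp h0r])
        (by linarith [ENNReal.ofReal_pos.mp h0r])]
      simpa [add_halves] using hrlt
  obtain ⟨δ, hδ0, hδ⟩ := hwe ε hε0
  have h1 : Filter.Tendsto (fun n => (u n).1) Filter.atTop (nhds p.1) :=
    (continuous_fst.tendsto p).comp hlim
  have h2 : Filter.Tendsto (fun n => (u n).2) Filter.atTop (nhds p.2) :=
    (continuous_snd.tendsto p).comp hlim
  obtain ⟨N1, hN1⟩ := Metric.tendsto_atTop.mp h1 δ hδ0
  obtain ⟨N2, hN2⟩ := Metric.tendsto_atTop.mp h2 ε hε0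
  set n := max N1 N2
  have hn1 : dist (u n).1 p.1 < δ := hN1 n (le_max_left _ _)
  have hn2 : dist (u n).2 p.2 < ε := hN2 n (le_max_right _ _)
  have h0 : EMetric.infEdist (u n).2 (F (u n).1) = 0 :=
    EMetric.mem_closure_iff_infEdist_zero.mp (hu n)
  have key : EMetric.infEdist p.2 (F p.1) ≤
      edist p.2 (u n).2 + EMetric.hausdorffEdist (F (u n).1) (F p.1) := by
    calc EMetric.infEdist p.2 (F p.1)
        ≤ edist p.2 (u n).2 + EMetric.infEdist (u n).2 (F p.1) :=
          EMetric.infEdist_le_edist_add_infEdist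
      _ ≤ edist p.2 (u n).2 + (EMetric.infEdist (u n).2 (F (u n).1) +
            EMetric.hausdorffEdist (F (u n).1) (F p.1)) := by
          gcongr
          exact EMetric.infEdist_le_infEdist_add_hausdorffEdist
      _ = edist p.2 (u n).2 + EMetric.hausdorffEdist (F (u n).1) (F p.1) := by
          rw [h0, zero_add]
  have hb : edist p.2 (u n).2 + EMetric.hausdorffEdist (F (u n).1) (F p.1) <
      ENNReal.ofReal ε + ENNReal.ofReal ε := by
    apply ENNReal.add_lt_add
    · rw [edist_dist]
      exact ENNReal.ofReal_lt_ofReal_iff_of_nonneg dist_nonneg |>.mpr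
        ((dist_comm p.2 (u n).2 ▸ hn2))
    · exact hδ _ _ hn1
  exact absurd (key.trans_lt hb) (not_lt.mpr hεlt.le)
end

section
/- A semi-decomposition F on a topological space is weakly almost periodic if and only if F is pointwise almost periodic and the class decomposition {closure(F(x)) : x ∈ X} is weakly upper semi-continuous. -/
universe u

/-- a semi-decomposition `F` on a topological space is weakly almost
periodic (pointwise almost periodic, and the saturation `⋃ x ∈ A, closure (F x)` of
every closed set `A` is closed) iff `F` is pointwise almost periodic and the class
decomposition `{closure (F x) | x ∈ X}` is weakly upper semi-continuous (every
element is closed, and every open neighborhood of an element contains a saturated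
open neighborhood of it). -/
theorem weaklyAlmostPeriodic_iff_pap_and_wusc {X : Type u} [TopologicalSpace X]
    (F : X → Set X) (hmem : ∀ x, x ∈ F x) (hsub : ∀ x y, x ∈ F y → F x ⊆ F y) :
    ((∀ x y, y ∈ closure (F x) → closure (F y) = closure (F x)) ∧
      ∀ A : Set X, IsClosed A → IsClosed (⋃ x ∈ A, closure (F x))) ↔
    ((∀ x y, y ∈ closure (F x) → closure (F y) = closure (F x)) ∧
      ((∀ x, IsClosed (closure (F x))) ∧
        ∀ (x : X) (U : Set X), IsOpen U → closure (F x) ⊆ U →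
          ∃ V : Set X, IsOpen V ∧ closure (F x) ⊆ V ∧ V ⊆ U ∧
            ∀ y ∈ V, closure (F y) ⊆ V)) := by
  have hxm : ∀ x : X, x ∈ closure (F x) := fun x => subset_closure (hmem x)
  constructor
  · rintro ⟨pap, hcl⟩
    refine ⟨pap, fun x => isClosed_closure, fun x U hU hxU => ?_⟩
    set S : Set X := ⋃ a ∈ Uᶜ, closure (F a) with hS
    have hScl : IsClosed S := hcl Uᶜ hU.isClosed_compl
    have hdisj : ∀ z : X, closure (F z) ⊆ U → closure (F z) ∩ S = ∅ := by
      intro z hz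
      ext w
      simp only [Set.mem_inter_iff, Set.mem_empty_iff_false, iff_false, not_and]
      intro hw hwS
      obtain ⟨a, ha, hwa⟩ := Set.mem_iUnion₂.mp hwS
      have h1 := pap z w hw
      have h2 := pap a w hwa
      have : a ∈ closure (F z) := by
        rw [← h1, h2]; exact hxm a
      exact ha (hz this)
    refine ⟨Sᶜ, hScl.isOpen_compl, ?_, ?_, ?_⟩
    · intro w hw hwS
      have := hdisj x hxU
      exact absurd (Set.mem_inter hw hwS) (by simp [this])
    · intro w hw
      by_contra hwU
      exact hw (Set.mem_iUnion₂.mpr ⟨w, hwU, hxm w⟩)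
    · intro y hy
      have hyU : closure (F y) ⊆ U := by
        intro w hw
        by_contra hwU
        exact hy (Set.mem_iUnion₂.mpr ⟨w, hwU, (pap y w hw).symm ▸ hxm y⟩)
      intro w hw hwS
      have := hdisj y hyU
      exact absurd (Set.mem_inter hw hwS) (by simp [this])
  · rintro ⟨pap, _, wusc⟩
    refine ⟨pap, fun A hA => ?_⟩
    rw [← isOpen_compl_iff]
    rw [isOpen_iff_forall_mem_open]
    intro p hp
    have hpA : closure (F p) ⊆ Aᶜ := by
      intro a hapF haA
      have h1 := pap p a hapF
      have : p ∈ closure (F a) := h1 ▸ hxm p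
      exact hp (Set.mem_iUnion₂.mpr ⟨a, haA, this⟩)
    obtain ⟨V, hVopen, hpV, hVA, hVsat⟩ := wusc p Aᶜ hA.isOpen_compl hpA
    refine ⟨V, ?_, hVopen, hpV (hxm p)⟩
    intro y hy hyS
    obtain ⟨a, ha, hya⟩ := Set.mem_iUnion₂.mp hyS
    have h2 := pap a y hya
    have : a ∈ V := hVsat y hy (h2 ▸ hxm a)
    exact hVA this ha
end

section
/- If F is a weakly almost periodic semi-decomposition on a normal topological space X, then any two distinct element closures have disjoint open saturated neighborhoods; consequently the class space X/F̂ is Hausdorff. -/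
universe u

/-- The equivalence relation identifying points with equal element closures;
its quotient is the class space `X/F̂`. -/
def classSetoid {X : Type u} [TopologicalSpace X] (F : X → Set X) : Setoid X :=
  ⟨fun a b => closure (F a) = closure (F b),
    ⟨fun _ => rfl, Eq.symm, Eq.trans⟩⟩

/-- if `F` is a weakly almost periodic semi-decomposition on a normal
space `X`, then any two distinct element closures have disjoint open saturated
neighborhoods, and the class space `X/F̂` is Hausdorff. -/
theorem wap_separation_and_hausdorff_class_space {X : Type u} [TopologicalSpace X]
    [NormalSpace X] (F : X → Set X)
    (hmem : ∀ x, x ∈ F x) (hsub : ∀ x y, x ∈ F y → F x ⊆ F y)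
    (hpap : ∀ x y, y ∈ closure (F x) → closure (F y) = closure (F x))
    (hwap : ∀ A : Set X, IsClosed A → IsClosed (⋃ x ∈ A, closure (F x))) :
    (∀ x y : X, closure (F x) ≠ closure (F y) →
      ∃ U V : Set X, IsOpen U ∧ IsOpen V ∧ closure (F x) ⊆ U ∧ closure (F y) ⊆ V ∧
        Disjoint U V ∧ (∀ z ∈ U, closure (F z) ⊆ U) ∧ (∀ z ∈ V, closure (F z) ⊆ V)) ∧
    T2Space (Quotient (classSetoid F)) := by
  have hselfc : ∀ z : X, z ∈ closure (F z) := fun z => subset_closure (hmem z)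
  have key : ∀ x y : X, closure (F x) ≠ closure (F y) →
      ∃ U V : Set X, IsOpen U ∧ IsOpen V ∧ closure (F x) ⊆ U ∧ closure (F y) ⊆ V ∧
        Disjoint U V ∧ (∀ z ∈ U, closure (F z) ⊆ U) ∧ (∀ z ∈ V, closure (F z) ⊆ V) := by
    intro x y hxy
    have hdisj : Disjoint (closure (F x)) (closure (F y)) := by
      rw [Set.disjoint_left]
      intro z hzx hzy
      exact hxy ((hpap x z hzx).symm.trans (hpap y z hzy))
    obtain ⟨U₀, V₀, hU₀, hV₀, hxU₀, hyV₀, hUV₀⟩ :=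
      NormalSpace.normal _ _ isClosed_closure isClosed_closure hdisj
    set SA := ⋃ a ∈ U₀ᶜ, closure (F a) with hSA
    set SB := ⋃ a ∈ V₀ᶜ, closure (F a) with hSB
    have hclA : IsClosed SA := hwap _ hU₀.isClosed_compl
    have hclB : IsClosed SB := hwap _ hV₀.isClosed_compl
    have hmemS : ∀ (W : Set X) (z : X), z ∉ W → z ∈ ⋃ a ∈ Wᶜ, closure (F a) := by
      intro W z hz
      exact Set.mem_biUnion hz (hselfc z)
    have hsub' : ∀ (W : Set X) (p : X), closure (F p) ⊆ W →
        closure (F p) ⊆ (⋃ a ∈ Wᶜ, closure (F a))ᶜ := by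
      intro W p hW z hz hzS
      obtain ⟨a, ha, hza⟩ := Set.mem_iUnion₂.1 hzS
      have h1 : closure (F z) = closure (F p) := hpap p z hz
      have h2 : closure (F z) = closure (F a) := hpap a z hza
      exact ha (hW ((h2.symm.trans h1) ▸ hselfc a))
    have hsat : ∀ (W : Set X), ∀ z ∈ (⋃ a ∈ Wᶜ, closure (F a))ᶜ,
        closure (F z) ⊆ (⋃ a ∈ Wᶜ, closure (F a))ᶜ := by
      intro W z hz w hw hwS
      obtain ⟨a, ha, hwa⟩ := Set.mem_iUnion₂.1 hwS
      have h1 : closure (F w) = closure (F z) := hpap z w hw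
      have h2 : closure (F w) = closure (F a) := hpap a w hwa
      exact hz (Set.mem_biUnion ha ((h1.symm.trans h2) ▸ hselfc z))
    refine ⟨SAᶜ, SBᶜ, hclA.isOpen_compl, hclB.isOpen_compl, hsub' U₀ x hxU₀,
      hsub' V₀ y hyV₀, ?_, hsat U₀, hsat V₀⟩
    rw [Set.disjoint_left]
    intro z hzA hzB
    have hzU : z ∈ U₀ := by
      by_contra h; exact hzA (hmemS U₀ z h)
    have hzV : z ∈ V₀ := by
      by_contra h; exact hzB (hmemS V₀ z h)
    exact Set.disjoint_left.1 hUV₀ hzU hzV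
  refine ⟨key, ?_⟩
  constructor
  intro a b hab
  obtain ⟨x, rfl⟩ := Quotient.exists_rep a
  obtain ⟨y, rfl⟩ := Quotient.exists_rep b
  have hxy : closure (F x) ≠ closure (F y) := fun h => hab (Quotient.sound h)
  obtain ⟨U, V, hU, hV, hxU, hyV, hUV, hsatU, hsatV⟩ := key x y hxy
  have hpre : ∀ (W : Set X), (∀ z ∈ W, closure (F z) ⊆ W) →
      Quotient.mk (classSetoid F) ⁻¹' (Quotient.mk (classSetoid F) '' W) = W := by
    intro W hsatW
    ext z
    constructor
    · rintro ⟨u, hu, heq⟩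
      have h : closure (F u) = closure (F z) := Quotient.exact heq
      exact hsatW u hu (h ▸ hselfc z)
    · intro hz; exact ⟨z, hz, rfl⟩
  refine ⟨Quotient.mk _ '' U, Quotient.mk _ '' V, ?_, ?_, ⟨x, hxU (hselfc x), rfl⟩,
    ⟨y, hyV (hselfc y), rfl⟩, ?_⟩
  · show IsOpen (Quotient.mk (classSetoid F) '' U)
    rw [isOpen_coinduced]
    show IsOpen (Quotient.mk (classSetoid F) ⁻¹' (Quotient.mk (classSetoid F) '' U))
    rw [hpre U hsatU]; exact hU
  · show IsOpen (Quotient.mk (classSetoid F) '' V)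
    rw [isOpen_coinduced]
    show IsOpen (Quotient.mk (classSetoid F) ⁻¹' (Quotient.mk (classSetoid F) '' V))
    rw [hpre V hsatV]; exact hV
  · rw [Set.disjoint_left]
    rintro c ⟨u, hu, rfl⟩ ⟨v, hv, heq⟩
    have h : closure (F v) = closure (F u) := Quotient.exact heq
    exact Set.disjoint_left.1 hUV hu (hsatV v hv (h ▸ hselfc u))
end

section
/- Every weakly almost periodic semi-decomposition on a normal Hausdorff (T4) space is R-closed: the element closure relation { (x,y) : y ∈ closure(F(x)) } is closed in X × X. -/
universe u

/-- every weakly almost periodic semi-decomposition on a T4 space is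
`R`-closed: the element closure relation `{(x,y) | y ∈ closure (F x)}` is closed. -/
theorem wap_R_closed {X : Type u} [TopologicalSpace X] [T4Space X] (F : X → Set X)
    (hmem : ∀ x, x ∈ F x) (hsub : ∀ x y, x ∈ F y → F x ⊆ F y)
    (hpap : ∀ x y, y ∈ closure (F x) → closure (F y) = closure (F x))
    (hwap : ∀ A : Set X, IsClosed A → IsClosed (⋃ x ∈ A, closure (F x))) :
    IsClosed {p : X × X | p.2 ∈ closure (F p.1)} := by
  rw [← isOpen_compl_iff, isOpen_iff_mem_nhds]
  rintro ⟨x, y⟩ hxy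
  simp only [Set.mem_compl_iff, Set.mem_setOf_eq] at hxy
  obtain ⟨U, V, hU, hV, hCU, hyV, hUV⟩ :=
    normal_separation (isClosed_closure (s := F x)) (isClosed_singleton (x := y))
      (by simpa [Set.disjoint_singleton_right] using hxy)
  have hyV' : y ∈ V := hyV rfl
  set K := ⋃ z ∈ Uᶜ, closure (F z) with hK
  have hKclosed : IsClosed K := hwap _ hU.isClosed_compl
  have hxK : x ∉ K := by
    intro hx
    simp only [hK, Set.mem_iUnion] at hx
    obtain ⟨z, hzU, hxz⟩ := hx
    have : closure (F x) = closure (F z) := hpap z x hxz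
    exact hzU (hCU (this ▸ subset_closure (hmem z)))
  have hmemnhds : (Kᶜ ×ˢ V) ∈ nhds (x, y) :=
    prod_mem_nhds (hKclosed.isOpen_compl.mem_nhds hxK) (hV.mem_nhds hyV')
  refine Filter.mem_of_superset hmemnhds ?_
  rintro ⟨z, w⟩ ⟨hzK, hwV⟩ hzw
  simp only [Set.mem_setOf_eq] at hzw
  have hwU : w ∉ U := fun h => (Set.disjoint_left.mp hUV h) hwV
  have hz : z ∈ closure (F w) := (hpap z w hzw) ▸ subset_closure (hmem z)
  exact hzK (Set.mem_iUnion₂.mpr ⟨w, hwU, hz⟩)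
end

section
/- Let v : ℝ × T² → T² be the flow on the torus T² = (ℝ/ℤ)² defined by v(t,[x,y]) = [x, y + (2 + cos x)·t]. Then every orbit is periodic (each orbit is the circle {x} × (ℝ/ℤ)), the flow is R-closed, but the flow is not equicontinuous with respect to the standard metric: for every δ > 0 there exist points p, q with d(p,q) < δ and some t ∈ ℝ with d(v(t,p), v(t,q)) > 1/3. -/
open scoped Real

noncomputable section

instance : Fact ((0:ℝ) < 1) := ⟨one_pos⟩

/-- The torus `T² = (ℝ/ℤ)²` with the standard (product of quotient) metric. -/
abbrev Torus : Type := AddCircle (1 : ℝ) × AddCircle (1 : ℝ)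

/-- The function `cos` on `ℝ/ℤ`, i.e. `x ↦ cos (2π x)` on representatives. -/
def circleCos (x : AddCircle (1 : ℝ)) : ℝ :=
  Real.cos (2 * π * ((AddCircle.equivIco 1 0 x : Set.Ico (0:ℝ) (0 + 1)) : ℝ))

/-- The flow `v(t,[x,y]) = [x, y + (2 + cos x) t]` on the torus. -/
def torusFlow (t : ℝ) (p : Torus) : Torus :=
  (p.1, p.2 + (((2 + circleCos p.1) * t : ℝ) : AddCircle (1 : ℝ)))

lemma circleCos_coe (x : ℝ) : circleCos ((x : ℝ) : AddCircle (1:ℝ)) = Real.cos (2 * π * Int.fract x) := by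
  unfold circleCos
  rw [AddCircle.coe_equivIco_mk_apply]
  norm_num

lemma circleCos_pos (a : AddCircle (1:ℝ)) : (0:ℝ) < 2 + circleCos a := by
  have := Real.neg_one_le_cos (x := 2 * π * ((AddCircle.equivIco 1 0 a : Set.Ico (0:ℝ) (0 + 1)) : ℝ))
  unfold circleCos; linarith

lemma norm_coe_half : ‖(((1:ℝ)/2 : ℝ) : AddCircle (1:ℝ))‖ = 1/2 := by
  have := AddCircle.norm_half_period_eq (p := (1:ℝ))
  norm_num at this ⊢



/-- for the flow `v(t,[x,y]) = [x, y + (2 + cos x) t]` on the torus: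
every orbit is periodic and equals the circle `{x} × (ℝ/ℤ)`; the flow is `R`-closed;
but it is not equicontinuous for the standard metric: for every `δ > 0` there are
points `p, q` with `dist p q < δ` and a time `t` with `dist (v t p) (v t q) > 1/3`. -/
theorem torusFlow_properties :
    (∀ p : Torus, (∃ t : ℝ, 0 < t ∧ torusFlow t p = p) ∧
      {q : Torus | ∃ t : ℝ, torusFlow t p = q} = {q : Torus | q.1 = p.1}) ∧
    IsClosed {pq : Torus × Torus |
      pq.2 ∈ closure {q : Torus | ∃ t : ℝ, torusFlow t pq.1 = q}} ∧
    (∀ δ : ℝ, 0 < δ → ∃ (p q : Torus) (t : ℝ),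
      dist p q < δ ∧ (1 : ℝ) / 3 < dist (torusFlow t p) (torusFlow t q)) := by
  have horbit : ∀ p : Torus,
      {q : Torus | ∃ t : ℝ, torusFlow t p = q} = {q : Torus | q.1 = p.1} := by
    intro p
    ext q
    constructor
    · rintro ⟨t, rfl⟩; rfl
    · intro hq
      have hc := circleCos_pos p.1
      obtain ⟨r, hr⟩ := QuotientAddGroup.mk_surjective (q.2 - p.2)
      refine ⟨r / (2 + circleCos p.1), ?_⟩
      have : ((2 + circleCos p.1) * (r / (2 + circleCos p.1)) : ℝ) = r := by
        field_simp
      unfold torusFlow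
      rw [this, hr]
      have : p.2 + (q.2 - p.2) = q.2 := by abel
      rw [this]
      exact Prod.ext hq.symm rfl
  refine ⟨fun p => ⟨?_, horbit p⟩, ?_, ?_⟩
  · -- periodicity
    have hc := circleCos_pos p.1
    refine ⟨1 / (2 + circleCos p.1), by positivity, ?_⟩
    have h1 : ((2 + circleCos p.1) * (1 / (2 + circleCos p.1)) : ℝ) = 1 := by
      field_simp
    unfold torusFlow
    rw [h1]
    have : ((1:ℝ) : AddCircle (1:ℝ)) = 0 := by exact_mod_cast AddCircle.coe_period 1
    rw [this, add_zero]
  · -- R-closed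
    have hclosed : ∀ a : AddCircle (1:ℝ), IsClosed {q : Torus | q.1 = a} :=
      fun a => isClosed_eq continuous_fst continuous_const
    have : {pq : Torus × Torus |
        pq.2 ∈ closure {q : Torus | ∃ t : ℝ, torusFlow t pq.1 = q}} =
        {pq : Torus × Torus | pq.2.1 = pq.1.1} := by
      ext pq
      simp only [Set.mem_setOf_eq, horbit pq.1, (hclosed pq.1.1).closure_eq]
    rw [this]
    exact isClosed_eq (continuous_fst.comp continuous_snd) (continuous_fst.comp continuous_fst)
  · -- not equicontinuous
    intro δ hδ
    set x₀ : ℝ := min (δ/2) (1/2) with hx₀def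
    have hx₀pos : 0 < x₀ := lt_min (by linarith) (by norm_num)
    have hx₀le : x₀ ≤ 1/2 := min_le_right _ _
    have hcoslt : Real.cos (2 * π * x₀) < 1 := by
      have := Real.cos_lt_cos_of_nonneg_of_le_pi (x := 0) (y := 2 * π * x₀)
        le_rfl (by nlinarith [Real.pi_pos]) (by positivity)
      simpa using this
    have hcosge : -1 ≤ Real.cos (2 * π * x₀) := Real.neg_one_le_cos _
    set c : ℝ := 2 + Real.cos (2 * π * x₀) with hcdef
    set t : ℝ := (1/2) / (1 - Real.cos (2 * π * x₀)) with htdef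
    refine ⟨(0, 0), (((x₀ : ℝ) : AddCircle (1:ℝ)), 0), t, ?_, ?_⟩
    · -- dist p q < δ
      rw [Prod.dist_eq]
      simp only [dist_self]
      have h1 : dist (0 : AddCircle (1:ℝ)) ((x₀ : ℝ) : AddCircle (1:ℝ)) ≤ |x₀| := by
        rw [dist_eq_norm, zero_sub, norm_neg]
        exact (QuotientAddGroup.norm_mk_le_norm (m := x₀)).trans_eq (Real.norm_eq_abs x₀)
      have : |x₀| < δ := by
        rw [abs_of_pos hx₀pos]
        calc x₀ ≤ δ/2 := min_le_left _ _
          _ < δ := by linarith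
      simp only [max_lt_iff]
      exact ⟨lt_of_le_of_lt h1 this, hδ⟩
    · -- dist of flows > 1/3
      have hc0 : circleCos (0 : AddCircle (1:ℝ)) = 1 := by
        have : (0 : AddCircle (1:ℝ)) = ((0:ℝ) : AddCircle (1:ℝ)) := rfl
        rw [this, circleCos_coe]
        simp
      have hcx : circleCos ((x₀ : ℝ) : AddCircle (1:ℝ)) = Real.cos (2 * π * x₀) := by
        rw [circleCos_coe, Int.fract_eq_self.2 ⟨hx₀pos.le, by linarith⟩]
      rw [Prod.dist_eq]
      refine lt_of_lt_of_le ?_ (le_max_right _ _)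
      unfold torusFlow
      simp only [hc0, hcx, zero_add]
      rw [dist_eq_norm]
      have key : ((2 + 1) * t : ℝ) - (2 + Real.cos (2 * π * x₀)) * t = 1/2 := by
        have hne : (1 : ℝ) - Real.cos (2 * π * x₀) ≠ 0 := by linarith
        have : ((2 + 1) * t : ℝ) - (2 + Real.cos (2 * π * x₀)) * t
            = (1 - Real.cos (2 * π * x₀)) * t := by ring
        rw [this, htdef, mul_div_cancel₀ _ hne]
      rw [← AddCircle.coe_sub, key, norm_coe_half]
      norm_num

end
end
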